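/- Adding an asymmetrically dominated decoy can reverse a strict maximin-safety preference: there exist a finite state space S (with 3 states), acts a₁,a₂,a₃ with menu M = {a₁,a₂,a₃} satisfying safety_M(a₂) > safety_M(a₃), and an act a₄ dominated by a₃ such that safety_{M∪{a₄}}(a₃) > safety_{M∪{a₄}}(a₂). (E.g., a₁=(9,2,6), a₂=(5,3,7), a₃=(4,8,8), a₄=(1,5,6).) -/

import Mathlib

open Finset

noncomputable def safety {S : Type*} [Fintype S] [Nonempty S]
    (M : Finset (S → ℝ)) (hM : M.Nonempty) (f : S → ℝ) : ℝ :=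
  univ.inf' univ_nonempty (fun s => f s - M.inf' hM (fun a => a s))

theorem decoy_reverses_safety_preference :
    ∃ (a₁ a₂ a₃ a₄ : Fin 3 → ℝ),
      (∀ s, a₄ s < a₃ s) ∧
      safety {a₁, a₂, a₃} (insert_nonempty _ _) a₂ > safety {a₁, a₂, a₃} (insert_nonempty _ _) a₃ ∧
      safety {a₁, a₂, a₃, a₄} (insert_nonempty _ _) a₃ >
        safety {a₁, a₂, a₃, a₄} (insert_nonempty _ _) a₂ := by
  refine ⟨![9,2,6], ![5,3,7], ![4,8,8], ![1,5,6], ?_, ?_, ?_⟩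
  · intro s; fin_cases s <;> norm_num
  all_goals
    simp only [safety, show (univ : Finset (Fin 3)) = {0,1,2} from by decide,
      Finset.inf'_insert, Finset.inf'_singleton]
    norm_num [Matrix.cons_val_zero, Matrix.cons_val_one, Matrix.cons_val_two, Matrix.vecHead, Matrix.vecTail]
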